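/- Let 0 ≤ β ≤ 1/√5 and set ā = √(2(1−5β²)/3) and c̄ = 2√2 β. Then the mixed point (ā, ā, −c̄) is a critical point of V_β: ∇V_β(ā, ā, −c̄) = 0. -/

import Mathlib

/-- The Lyapunov function `V_β` of the amplitude ODE system. -/
noncomputable def V (β a b c : ℝ) : ℝ :=
  -3 * (1 - β ^ 2) * (a ^ 2 + b ^ 2 + c ^ 2) + 6 * Real.sqrt 2 * β * (a * b * c)
    + 3 * (a ^ 2 * b ^ 2 + b ^ 2 * c ^ 2 + a ^ 2 * c ^ 2)
    + 3 / 4 * (a ^ 4 + b ^ 4 + c ^ 4)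

/-- Partial derivative of a function of three real variables in the first variable. -/
noncomputable def pA (f : ℝ → ℝ → ℝ → ℝ) (a b c : ℝ) : ℝ := deriv (fun t => f t b c) a

/-- Partial derivative in the second variable. -/
noncomputable def pB (f : ℝ → ℝ → ℝ → ℝ) (a b c : ℝ) : ℝ := deriv (fun t => f a t c) b

/-- Partial derivative in the third variable. -/
noncomputable def pC (f : ℝ → ℝ → ℝ → ℝ) (a b c : ℝ) : ℝ := deriv (fun t => f a b t) c

/-- The gradient `∇V_β`. -/
noncomputable def gradV (β a b c : ℝ) : ℝ × ℝ × ℝ :=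
  (pA (V β) a b c, pB (V β) a b c, pC (V β) a b c)

lemma derivA (β b c a : ℝ) :
    deriv (fun t => V β t b c) a =
      -3 * (1 - β ^ 2) * (2 * a) + 6 * Real.sqrt 2 * β * (b * c)
        + 3 * (2 * a * b ^ 2 + 2 * a * c ^ 2) + 3 / 4 * (4 * a ^ 3) := by
  have h1 : HasDerivAt (fun t : ℝ => t ^ 2) (2 * a) a := by simpa using hasDerivAt_pow 2 a
  have h4 : HasDerivAt (fun t : ℝ => t ^ 4) (4 * a ^ 3) a := by simpa using hasDerivAt_pow 4 a
  have h : HasDerivAt (fun t => V β t b c)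
      (-3 * (1 - β ^ 2) * (2 * a) + 6 * Real.sqrt 2 * β * (b * c)
        + 3 * (2 * a * b ^ 2 + 2 * a * c ^ 2) + 3 / 4 * (4 * a ^ 3)) a := by
    unfold V
    have T1 := (h1.add_const (b ^ 2 + c ^ 2)).const_mul (-3 * (1 - β ^ 2))
    have T2 := (((hasDerivAt_id a).mul_const b).mul_const c).const_mul (6 * Real.sqrt 2 * β)
    have T3 := (((h1.mul_const (b ^ 2)).add_const (b ^ 2 * c ^ 2)).add
      (h1.mul_const (c ^ 2))).const_mul (3 : ℝ)
    have T4 := (h4.add_const (b ^ 4 + c ^ 4)).const_mul (3 / 4 : ℝ)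
    have := ((T1.add T2).add T3).add T4
    convert this using 1 <;> (try funext x) <;> (try simp only [id_eq, Pi.add_apply]) <;> first | ring | rfl
  exact h.deriv

lemma derivB (β a c b : ℝ) :
    deriv (fun t => V β a t c) b =
      -3 * (1 - β ^ 2) * (2 * b) + 6 * Real.sqrt 2 * β * (a * c)
        + 3 * (2 * b * a ^ 2 + 2 * b * c ^ 2) + 3 / 4 * (4 * b ^ 3) := by
  have h1 : HasDerivAt (fun t : ℝ => t ^ 2) (2 * b) b := by simpa using hasDerivAt_pow 2 b
  have h4 : HasDerivAt (fun t : ℝ => t ^ 4) (4 * b ^ 3) b := by simpa using hasDerivAt_pow 4 b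
  have h : HasDerivAt (fun t => V β a t c)
      (-3 * (1 - β ^ 2) * (2 * b) + 6 * Real.sqrt 2 * β * (a * c)
        + 3 * (2 * b * a ^ 2 + 2 * b * c ^ 2) + 3 / 4 * (4 * b ^ 3)) b := by
    unfold V
    have T1 := ((h1.const_add (a ^ 2)).add_const (c ^ 2)).const_mul (-3 * (1 - β ^ 2))
    have T2 := (((hasDerivAt_id b).const_mul a).mul_const c).const_mul (6 * Real.sqrt 2 * β)
    have T3 := (((h1.const_mul (a ^ 2)).add (h1.mul_const (c ^ 2))).add_const
      (a ^ 2 * c ^ 2)).const_mul (3 : ℝ)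
    have T4 := ((h4.const_add (a ^ 4)).add_const (c ^ 4)).const_mul (3 / 4 : ℝ)
    have := ((T1.add T2).add T3).add T4
    convert this using 1 <;> (try funext x) <;> (try simp only [id_eq, Pi.add_apply]) <;> first | ring | rfl
  exact h.deriv

lemma derivC (β a b c : ℝ) :
    deriv (fun t => V β a b t) c =
      -3 * (1 - β ^ 2) * (2 * c) + 6 * Real.sqrt 2 * β * (a * b)
        + 3 * (2 * c * a ^ 2 + 2 * c * b ^ 2) + 3 / 4 * (4 * c ^ 3) := by
  have h1 : HasDerivAt (fun t : ℝ => t ^ 2) (2 * c) c := by simpa using hasDerivAt_pow 2 c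
  have h4 : HasDerivAt (fun t : ℝ => t ^ 4) (4 * c ^ 3) c := by simpa using hasDerivAt_pow 4 c
  have h : HasDerivAt (fun t => V β a b t)
      (-3 * (1 - β ^ 2) * (2 * c) + 6 * Real.sqrt 2 * β * (a * b)
        + 3 * (2 * c * a ^ 2 + 2 * c * b ^ 2) + 3 / 4 * (4 * c ^ 3)) c := by
    unfold V
    have T1 := (h1.const_add (a ^ 2 + b ^ 2)).const_mul (-3 * (1 - β ^ 2))
    have T2 := ((hasDerivAt_id c).const_mul (a * b)).const_mul (6 * Real.sqrt 2 * β)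
    have T3 := (((h1.const_mul (b ^ 2)).add (h1.const_mul (a ^ 2))).const_add
      (a ^ 2 * b ^ 2)).const_mul (3 : ℝ)
    have T4 := (h4.const_add (a ^ 4 + b ^ 4)).const_mul (3 / 4 : ℝ)
    have := ((T1.add T2).add T3).add T4
    convert this using 1 <;> (try funext x) <;> (try simp only [id_eq, Pi.add_apply]) <;> first | ring | rfl
  exact h.deriv

/-- For `0 ≤ β ≤ 1/√5`, with `ā = √(2(1 - 5β²)/3)` and `c̄ = 2√2 β`, the mixed
point `(ā, ā, -c̄)` is a critical point of `V_β`. -/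
theorem mixed_critical_point (β abar cbar : ℝ) (hβ0 : 0 ≤ β)
    (hβ1 : β ≤ 1 / Real.sqrt 5)
    (habar : abar = Real.sqrt (2 * (1 - 5 * β ^ 2) / 3))
    (hcbar : cbar = 2 * Real.sqrt 2 * β) :
    gradV β abar abar (-cbar) = 0 := by
  have hs : Real.sqrt 2 ^ 2 = 2 := Real.sq_sqrt (by norm_num)
  have hβ2 : β ^ 2 ≤ 1 / 5 := by
    have h5 : (0:ℝ) < Real.sqrt 5 := Real.sqrt_pos.mpr (by norm_num)
    have := mul_self_le_mul_self hβ0 hβ1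
    calc β ^ 2 = β * β := sq β
      _ ≤ (1 / Real.sqrt 5) * (1 / Real.sqrt 5) := this
      _ = 1 / 5 := by
          rw [div_mul_div_comm, one_mul, Real.mul_self_sqrt (by norm_num : (0:ℝ) ≤ 5)]
  have ha2 : abar ^ 2 = 2 * (1 - 5 * β ^ 2) / 3 := by
    rw [habar, Real.sq_sqrt]; nlinarith
  have e1 : pA (V β) abar abar (-cbar) = 0 := by
    rw [pA, derivA, hcbar]
    linear_combination (12 * β ^ 2 * abar) * hs + (9 * abar) * ha2
  have e2 : pB (V β) abar abar (-cbar) = 0 := by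
    rw [pB, derivB, hcbar]
    linear_combination (12 * β ^ 2 * abar) * hs + (9 * abar) * ha2
  have e3 : pC (V β) abar abar (-cbar) = 0 := by
    rw [pC, derivC, hcbar]
    linear_combination (-24 * Real.sqrt 2 * β ^ 3) * hs + (-18 * Real.sqrt 2 * β) * ha2
  rw [gradV, e1, e2, e3]
  rfl
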